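/- Let g be a finite-dimensional nilpotent real Lie algebra that admits a cyclic Minkowski norm F. Then g is abelian. Equivalently, non-Abelian nilpotent Lie groups do not admit cyclic left-invariant Finsler metrics. -/

import Mathlib

noncomputable section

/-- The fundamental tensor `g_y(u,v) = (1/2)·∂²/∂s∂t|_{s=t=0} F(y+su+tv)²`. -/
def gTensor {V : Type*} [NormedAddCommGroup V] [NormedSpace ℝ V]
    (F : V → ℝ) (y u v : V) : ℝ :=
  (1 / 2) * deriv (fun s : ℝ => deriv (fun t : ℝ => (F (y + s • u + t • v)) ^ 2) 0) 0

/-- The Cartan tensor `C_y(u,v,w) = (1/2)·d/dt|_{t=0} g_{y+tw}(u,v)`. -/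
def cartanTensor {V : Type*} [NormedAddCommGroup V] [NormedSpace ℝ V]
    (F : V → ℝ) (y u v w : V) : ℝ :=
  (1 / 2) * deriv (fun t : ℝ => gTensor F (y + t • w) u v) 0

/-- `F` is a Minkowski norm: positive and smooth away from `0`, positively
homogeneous of degree one, with positive-definite symmetric bilinear fundamental tensor. -/
structure IsMinkowskiNorm {V : Type*} [NormedAddCommGroup V] [NormedSpace ℝ V]
    (F : V → ℝ) : Prop where
  pos : ∀ y : V, y ≠ 0 → 0 < F y
  smooth : ContDiffOn ℝ (⊤ : ℕ∞) F {(0 : V)}ᶜ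
  homog : ∀ c : ℝ, 0 < c → ∀ y : V, F (c • y) = c * F y
  g_symm : ∀ y : V, y ≠ 0 → ∀ u v : V, gTensor F y u v = gTensor F y v u
  g_add_left : ∀ y : V, y ≠ 0 → ∀ u u' v : V,
    gTensor F y (u + u') v = gTensor F y u v + gTensor F y u' v
  g_smul_left : ∀ y : V, y ≠ 0 → ∀ (c : ℝ) (u v : V),
    gTensor F y (c • u) v = c * gTensor F y u v
  g_posdef : ∀ y : V, y ≠ 0 → ∀ u : V, u ≠ 0 → 0 < gTensor F y u u

/-- A Lie algebra structure on the real vector space `V`, given as a bilinear map. -/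
structure IsLieBracket {V : Type*} [AddCommGroup V] [Module ℝ V]
    (L : V →ₗ[ℝ] V →ₗ[ℝ] V) : Prop where
  alternate : ∀ x : V, L x x = 0
  jacobi : ∀ x y z : V, L x (L y z) = L (L x y) z + L y (L x z)

/-- The cyclic condition for a Minkowski norm on a Lie algebra. -/
def IsCyclicNorm {V : Type*} [NormedAddCommGroup V] [NormedSpace ℝ V]
    (L : V →ₗ[ℝ] V →ₗ[ℝ] V) (F : V → ℝ) : Prop :=
  ∀ y : V, y ≠ 0 → ∀ x z : V,
    gTensor F y (L x y) z + gTensor F y (L y z) x + gTensor F y (L z x) y = 0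

/-- The Riemann curvature `R_y(u) = D_η N(y,u) − N(y,N(y,u)) + N(y,[y,u]) − [y,N(y,u)]`. -/
def RiemannCurv {V : Type*} [NormedAddCommGroup V] [NormedSpace ℝ V]
    (L : V →ₗ[ℝ] V →ₗ[ℝ] V) (η : V → V) (N : V → V → V) (y u : V) : V :=
  fderiv ℝ (fun z => N z u) y (η y) - N y (N y u) + N y (L y u) - L y (N y u)

/-- Projection onto `m` along `h` in the decomposition `g = h ⊕ m`. -/
def projTo {V : Type*} [AddCommGroup V] [Module ℝ V] (h m : Submodule ℝ V)
    (hcompl : IsCompl h m) : V →ₗ[ℝ] m :=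
  m.linearProjOfIsCompl h hcompl.symm

/-- The inner product making the basis `e` orthonormal. -/
def basisInner {V : Type*} [AddCommGroup V] [Module ℝ V] {ι : Type*} [Fintype ι]
    (e : Module.Basis ι ℝ V) (x y : V) : ℝ :=
  ∑ k, e.repr x k * e.repr y k


/-- The lower central series of the Lie bracket `L`. -/
def lcsOf {V : Type*} [AddCommGroup V] [Module ℝ V]
    (L : V →ₗ[ℝ] V →ₗ[ℝ] V) : ℕ → Submodule ℝ V
  | 0 => ⊤
  | k + 1 => Submodule.span ℝ {z | ∃ x : V, ∃ y ∈ lcsOf L k, z = L x y}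


private lemma lcs_succ_le {V : Type*} [AddCommGroup V] [Module ℝ V]
    (L : V →ₗ[ℝ] V →ₗ[ℝ] V) : ∀ n, lcsOf L (n + 1) ≤ lcsOf L n := by
  intro n
  induction n with
  | zero => exact le_top
  | succ n ih =>
    show Submodule.span ℝ _ ≤ Submodule.span ℝ _
    apply Submodule.span_mono
    rintro z ⟨x, y, hy, rfl⟩
    exact ⟨x, y, ih hy, rfl⟩

private lemma lcs_le_one {V : Type*} [AddCommGroup V] [Module ℝ V]
    (L : V →ₗ[ℝ] V →ₗ[ℝ] V) : ∀ n, lcsOf L (n + 1) ≤ lcsOf L 1 := by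
  intro n
  induction n with
  | zero => exact le_rfl
  | succ n ih => exact le_trans (lcs_succ_le L (n + 1)) ih

/-- A finite-dimensional nilpotent real Lie algebra admitting a cyclic
Minkowski norm is abelian; equivalently, non-Abelian nilpotent Lie groups do not admit
cyclic left-invariant Finsler metrics. -/
theorem nilpotent_cyclic_implies_abelian
    {g : Type*} [NormedAddCommGroup g] [NormedSpace ℝ g] [FiniteDimensional ℝ g]
    (L : g →ₗ[ℝ] g →ₗ[ℝ] g) (hL : IsLieBracket L)
    (hnilp : ∃ k : ℕ, lcsOf L k = ⊥)
    (F : g → ℝ) (hF : IsMinkowskiNorm F) (hcyc : IsCyclicNorm L F) :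
    ∀ x y : g, L x y = 0 := by
  intro a b
  by_contra hab
  -- the Lie bracket is antisymmetric
  have antisym : ∀ u v : g, L u v = -L v u := by
    intro u v
    have h := hL.alternate (u + v)
    simp only [map_add, LinearMap.add_apply, hL.alternate, zero_add, add_zero] at h
    rw [eq_neg_iff_add_eq_zero, add_comm]
    exact h
  -- find the last nonzero term of the lower central series
  have hab1 : L a b ∈ lcsOf L 1 := by
    apply Submodule.subset_span
    exact ⟨a, b, Submodule.mem_top, rfl⟩
  have h1ne : lcsOf L 1 ≠ ⊥ := by
    intro h
    rw [h] at hab1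
    exact hab (Submodule.mem_bot ℝ |>.mp hab1)
  obtain ⟨k, hk⟩ := hnilp
  have hex : ∃ n, lcsOf L n = ⊥ := ⟨k, hk⟩
  classical
  let k0 := Nat.find hex
  have hk0bot : lcsOf L k0 = ⊥ := Nat.find_spec hex
  have hk0ne1 : k0 ≠ 1 := fun h => h1ne (h ▸ hk0bot)
  have hk0ne0 : k0 ≠ 0 := by
    intro h
    apply h1ne
    have : lcsOf L 0 = ⊥ := h ▸ hk0bot
    exact le_bot_iff.mp (this ▸ le_top)
  have hk02 : 2 ≤ k0 := by omega
  set m := k0 - 1 with hmdef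
  have hm1 : 1 ≤ m := by omega
  have hbot' : lcsOf L (m + 1) = ⊥ := by
    have : m + 1 = k0 := by omega
    rw [this]; exact hk0bot
  have hmne : lcsOf L m ≠ ⊥ := Nat.find_min hex (by omega)
  -- pick a nonzero x in lcsOf L m
  obtain ⟨x, hxmem, hx0⟩ := Submodule.exists_mem_ne_zero_of_ne_bot hmne
  -- x is central
  have hcent : ∀ z : g, L z x = 0 := by
    intro z
    have : L z x ∈ lcsOf L (m + 1) :=
      Submodule.subset_span ⟨z, x, hxmem, rfl⟩
    rw [hbot'] at this
    exact (Submodule.mem_bot ℝ).mp this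
  have hcent' : ∀ z : g, L x z = 0 := by
    intro z
    rw [antisym x z, hcent z, neg_zero]
  -- the linear functional w ↦ g_x(w, x)
  let φ : g →ₗ[ℝ] ℝ :=
    { toFun := fun w => gTensor F x w x
      map_add' := fun u v => hF.g_add_left x hx0 u v x
      map_smul' := fun c u => hF.g_smul_left x hx0 c u x }
  -- φ vanishes on all brackets, by the cyclic identity at y = x
  have hvan : ∀ u v : g, φ (L u v) = 0 := by
    intro u v
    have h := hcyc x hx0 v u
    rw [hcent v, hcent' u] at h
    have hz : gTensor F x (0 : g) u = 0 := by
      have := hF.g_smul_left x hx0 0 0 u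
      simpa using this
    have hz2 : gTensor F x (0 : g) v = 0 := by
      have := hF.g_smul_left x hx0 0 0 v
      simpa using this
    show gTensor F x (L u v) x = 0
    simpa [hz, hz2] using h
  -- hence φ vanishes on lcsOf L 1, which contains x
  have hker : lcsOf L 1 ≤ LinearMap.ker φ := by
    rw [show lcsOf L 1 = Submodule.span ℝ {z | ∃ u : g, ∃ y ∈ lcsOf L 0, z = L u y} from rfl,
      Submodule.span_le]
    rintro z ⟨u, y, -, rfl⟩
    exact hvan u y
  have hx1 : x ∈ lcsOf L 1 := by
    rcases Nat.exists_eq_add_of_le hm1 with ⟨j, hj⟩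
    rw [hj, add_comm] at hxmem
    exact lcs_le_one L j hxmem
  have : gTensor F x x x = 0 := hker hx1
  have := hF.g_posdef x hx0 x hx0
  linarith


end
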